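/- In ℚ[x][[t]], the coefficient of t^i in exp(x · Σ_{n≥1} ((-1)^{n-1}/n) n^d (t/(1-t))^n) has linear term (in x) equal to (-1)^{i-1}(i-1)! S(d,i) x, where S(d,i) is the Stirling number of the second kind. -/

import Mathlib

/-- Stirling numbers of the second kind. -/
def stirling2 : ℕ → ℕ → ℕ
  | 0, 0 => 1
  | 0, _ + 1 => 0
  | _ + 1, 0 => 0
  | n + 1, k + 1 => (k + 1) * stirling2 n (k + 1) + stirling2 n k

/-- The power series `t/(1-t) = t + t² + t³ + ⋯` over `ℚ`. -/
noncomputable def tOneSubT : PowerSeries ℚ := PowerSeries.mk fun n => if n = 0 then 0 else 1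

/-- `F_d(t) = ∑_{n ≥ 1} ((-1)^{n-1}/n) n^d (t/(1-t))^n`, so that
`γ(x,t) = λ(x, t/(1-t)) = exp(x · F_d(t))` for `ψ^n(x) = n^d x`. -/
noncomputable def Fser (d : ℕ) : PowerSeries ℚ :=
  PowerSeries.mk fun i => ∑ n ∈ Finset.range (i + 1),
    (if n = 0 then (0 : ℚ) else (-1) ^ (n - 1) / (n : ℚ) * (n : ℚ) ^ d) *
      PowerSeries.coeff i (tOneSubT ^ n)

/-- The coefficient of `t^i` in `exp(x · F_d(t)) ∈ ℚ[x][[t]]`, as a polynomial in `x`. -/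
noncomputable def gammaPoly (d i : ℕ) : Polynomial ℚ :=
  ∑ m ∈ Finset.range (i + 1),
    Polynomial.C ((Nat.factorial m : ℚ)⁻¹ * PowerSeries.coeff i (Fser d ^ m)) *
      Polynomial.X ^ m

/-- The universal coefficient `a(i; d, m)` of `x^m` in `γ^i(x)`. -/
noncomputable def acoef (i d m : ℕ) : ℚ := (gammaPoly d i).coeff m

/-! ### Auxiliary lemmas -/

open PowerSeries in
lemma tOneSubT_eq : tOneSubT = PowerSeries.X * (invOneSubPow ℚ 1).val := by
  rw [invOneSubPow_val_eq_mk_sub_one_add_choose_of_pos ℚ 1 one_pos]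
  ext n
  cases n with
  | zero => simp [tOneSubT]
  | succ n => simp [tOneSubT, PowerSeries.coeff_succ_X_mul]

open PowerSeries in
lemma tOneSubT_pow (m : ℕ) : tOneSubT ^ m = PowerSeries.X ^ m * ((invOneSubPow ℚ m).val) := by
  rw [tOneSubT_eq, mul_pow, ← Units.val_pow_eq_pow_val]
  congr 2
  rw [invOneSubPow_eq_inv_one_sub_pow, invOneSubPow_eq_inv_one_sub_pow, pow_one]

open PowerSeries in
lemma coeff_tpow (n i : ℕ) (hn : 1 ≤ n) (hni : n ≤ i) :
    PowerSeries.coeff i (tOneSubT ^ n) = ((i - 1).choose (n - 1) : ℚ) := by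
  rw [tOneSubT_pow, coeff_X_pow_mul', if_pos hni,
    invOneSubPow_val_eq_mk_sub_one_add_choose_of_pos ℚ n hn, coeff_mk]
  congr 2
  omega

/-- The alternating binomial sum `∑ₙ (-1)^{i+n} C(i,n) n^d`. -/
noncomputable def Bsum (d i : ℕ) : ℚ :=
  ∑ n ∈ Finset.range (i + 1), (-1 : ℚ) ^ (i + n) * (i.choose n) * (n : ℚ) ^ d

lemma Bsum_step (d k : ℕ) :
    Bsum d (k + 1) + Bsum d k =
      ∑ m ∈ Finset.range (k + 1), (-1 : ℚ) ^ (k + m) * (k.choose m) * ((m : ℚ) + 1) ^ d := by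
  have h1 : Bsum d (k + 1) =
      (∑ m ∈ Finset.range (k + 1),
        ((-1 : ℚ) ^ (k + m) * (k.choose m) * ((m : ℚ) + 1) ^ d
          + (-1 : ℚ) ^ (k + m) * (k.choose (m+1)) * ((m : ℚ) + 1) ^ d))
        + (-1 : ℚ) ^ (k + 1) * (0 : ℚ) ^ d := by
    rw [Bsum, Finset.sum_range_succ']
    congr 1
    · refine Finset.sum_congr rfl fun m _ => ?_
      rw [Nat.choose_succ_succ]
      push_cast
      simp only [pow_add, pow_succ, pow_zero]
      ring
    · simp
  have h2 : Bsum d k =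
      (∑ m ∈ Finset.range (k + 1),
        -((-1 : ℚ) ^ (k + m) * (k.choose (m+1)) * ((m : ℚ) + 1) ^ d))
        + (-1 : ℚ) ^ k * (0 : ℚ) ^ d := by
    rw [Bsum, Finset.sum_range_succ']
    congr 1
    · rw [Finset.sum_range_succ, Nat.choose_succ_self]
      simp only [Nat.cast_zero, mul_zero, zero_mul, add_zero, neg_zero]
      refine Finset.sum_congr rfl fun m _ => ?_
      push_cast
      simp only [pow_add, pow_succ, pow_zero]
      ring
    · simp
  rw [h1, h2, Finset.sum_add_distrib, Finset.sum_neg_distrib, pow_succ]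
  ring

lemma Bsum_rec (d k : ℕ) :
    Bsum (d + 1) (k + 1) = ((k : ℚ) + 1) * (Bsum d (k + 1) + Bsum d k) := by
  rw [Bsum_step, Finset.mul_sum, Bsum, Finset.sum_range_succ']
  simp only [Nat.cast_zero, zero_pow (Nat.succ_ne_zero d), mul_zero, add_zero]
  refine Finset.sum_congr rfl fun m _ => ?_
  have h : ((k : ℚ) + 1) * ((k.choose m : ℚ)) = ((k+1).choose (m+1) : ℚ) * ((m : ℚ) + 1) := by
    have h0 := congrArg (fun x : ℕ => (x : ℚ)) (Nat.add_one_mul_choose_eq k m)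
    push_cast at h0
    convert h0 using 2
  push_cast
  calc (-1:ℚ) ^ (k + 1 + (m + 1)) * ((k+1).choose (m+1)) * ((m:ℚ)+1) ^ (d+1)
      = (-1:ℚ) ^ (k + m) * (((k+1).choose (m+1) : ℚ) * ((m : ℚ) + 1)) * ((m:ℚ)+1) ^ d := by
        simp only [pow_add, pow_succ, pow_zero]; ring
    _ = ((k : ℚ) + 1) * ((-1:ℚ) ^ (k + m) * (k.choose m) * ((m:ℚ)+1) ^ d) := by rw [← h]; ring

lemma Bsum_eq (d : ℕ) : ∀ i, Bsum d i = (i.factorial : ℚ) * (stirling2 d i : ℚ) := by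
  induction d with
  | zero =>
    intro i
    have hz : (∑ n ∈ Finset.range (i + 1), (-1 : ℤ) ^ n * (i.choose n)) =
        if i = 0 then 1 else 0 := Int.alternating_sum_range_choose
    have hB : Bsum 0 i =
        (-1 : ℚ) ^ i * ((∑ n ∈ Finset.range (i + 1), (-1 : ℤ) ^ n * (i.choose n) : ℤ) : ℚ) := by
      rw [Bsum]
      push_cast
      rw [Finset.mul_sum]
      exact Finset.sum_congr rfl fun n _ => by rw [pow_add]; ring
    rw [hB, hz]
    cases i with
    | zero => simp [stirling2]
    | succ k => simp [stirling2]
  | succ d ih =>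
    intro i
    cases i with
    | zero => simp [Bsum, stirling2, zero_pow (Nat.succ_ne_zero d)]
    | succ k =>
      rw [Bsum_rec, ih, ih, stirling2]
      push_cast [Nat.factorial_succ]
      ring

lemma acoef_one (d j : ℕ) : acoef (j + 1) d 1 = PowerSeries.coeff (j + 1) (Fser d) := by
  unfold acoef gammaPoly
  rw [Polynomial.finset_sum_coeff, Finset.sum_eq_single 1]
  · simp [Nat.factorial]
  · intro b _ hb1
    simp [mul_assoc, Polynomial.coeff_C_mul, Polynomial.coeff_X_pow, Ne.symm hb1]
  · intro h
    exact absurd (Finset.mem_range.2 (by omega)) h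

/-- The linear term (in `x`) of the `t^i`-coefficient of
`exp(x · ∑_{n≥1} ((-1)^{n-1}/n) n^d (t/(1-t))^n)` equals
`(-1)^{i-1} (i-1)! S(d,i) · x`, where `S(d,i)` is the Stirling number of the
second kind. -/
theorem stmt_11 (d i : ℕ) (hd : 1 ≤ d) (hi : 1 ≤ i) :
    acoef i d 1 =
      (-1 : ℚ) ^ (i - 1) * (Nat.factorial (i - 1) : ℚ) * (stirling2 d i : ℚ) := by
  obtain ⟨j, rfl⟩ : ∃ j, i = j + 1 := ⟨i - 1, (Nat.succ_pred_eq_of_pos hi).symm⟩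
  have hred : (j + 1 : ℕ) - 1 = j := rfl
  rw [hred, acoef_one, Fser, PowerSeries.coeff_mk]
  have hne : ((j : ℚ) + 1) ≠ 0 := by positivity
  apply mul_left_cancel₀ hne
  have key : ((j : ℚ) + 1) * (∑ n ∈ Finset.range (j + 1 + 1),
      (if n = 0 then (0 : ℚ) else (-1) ^ (n - 1) / (n : ℚ) * (n : ℚ) ^ d) *
        PowerSeries.coeff (j + 1) (tOneSubT ^ n)) = (-1 : ℚ) ^ j * Bsum d (j + 1) := by
    rw [Bsum, Finset.mul_sum, Finset.mul_sum]
    refine Finset.sum_congr rfl fun n hn => ?_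
    cases n with
    | zero => simp [zero_pow (by omega : d ≠ 0)]
    | succ m =>
      have hm : m + 1 ≤ j + 1 := by
        have := Finset.mem_range.1 hn; omega
      rw [coeff_tpow (m + 1) (j + 1) (by omega) hm]
      simp only [Nat.add_sub_cancel, if_neg (Nat.succ_ne_zero m)]
      have h : ((j : ℚ) + 1) * ((j.choose m : ℚ)) = ((j+1).choose (m+1) : ℚ) * ((m : ℚ) + 1) := by
        have h0 := congrArg (fun x : ℕ => (x : ℚ)) (Nat.add_one_mul_choose_eq j m)
        push_cast at h0
        convert h0 using 2
      have hm1 : ((m : ℚ) + 1) ≠ 0 := by positivity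
      have hs : (-1:ℚ) ^ j * (-1:ℚ) ^ (j + 1 + (m + 1)) = (-1:ℚ) ^ m := by
        rw [← pow_add, show j + (j + 1 + (m + 1)) = m + 2 * (j + 1) by ring, pow_add, pow_mul]
        norm_num
      push_cast
      field_simp
      rw [← hs]
      linear_combination (-1:ℚ) ^ j * (-1:ℚ) ^ (j + 1 + (m + 1)) * h
  rw [key, Bsum_eq]
  push_cast [Nat.factorial_succ]
  ring
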